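/- arXiv:2012.08648 — 9 statements merged into one kernel-verified Lean document; each statement's English description precedes it below -/
import Mathlib

section
/- In the max-min fairness allocation, if agent i reports a demand d_i strictly less than her entitlement e_i, then her allocation equals her reported demand d_i. -/
open Finset

/-- Max-min fairness allocation, characterized as weighted water-filling:
there is a water level `lam` such that every agent receives
`min (d i) (lam * e i)`, and the total allocation equals `min 1 (∑ d)`. -/
def IsMMF {n : ℕ} (e d a : Fin n → ℝ) : Prop :=
  ∃ lam : ℝ, 0 ≤ lam ∧ (∀ i, a i = min (d i) (lam * e i)) ∧
    (∑ i, a i = min 1 (∑ i, d i))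

/-- If agent `i` reports a demand strictly less than her entitlement,
her max-min fair allocation equals her reported demand. -/
theorem mmf_demand_below_entitlement {n : ℕ} (e d a : Fin n → ℝ)
    (he : ∀ i, 0 < e i) (hesum : ∑ i, e i = 1) (hd : ∀ i, 0 ≤ d i)
    (hmmf : IsMMF e d a) (i : Fin n) (hlt : d i < e i) :
    a i = d i := by
  obtain ⟨lam, hlam, ha, hsum⟩ := hmmf
  rcases le_or_gt 1 lam with h1 | h1
  · rw [ha i, min_eq_left]
    calc d i ≤ e i := hlt.le
    _ = 1 * e i := (one_mul _).symm
    _ ≤ lam * e i := by nlinarith [he i]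
  · -- lam < 1 : total allocation < 1, so ∑ a = ∑ d and a j ≤ d j pointwise
    have hle : ∀ j, a j ≤ d j := fun j => (ha j).symm ▸ min_le_left _ _
    have hlt1 : ∑ j, a j < 1 := by
      have : ∑ j, a j ≤ lam * ∑ j, e j := by
        rw [Finset.mul_sum]
        exact Finset.sum_le_sum fun j _ => (ha j).symm ▸ (min_le_right _ _)
      rw [hesum, mul_one] at this
      linarith
    have heq : ∑ j, a j = ∑ j, d j := by
      rcases min_cases 1 (∑ j, d j) with ⟨h, _⟩ | ⟨h, _⟩
      · rw [hsum, h] at hlt1; linarith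
      · rw [hsum, h]
    exact (Finset.sum_eq_sum_iff_of_le (fun j _ => hle j)).mp heq i (Finset.mem_univ i)
end

section
/- In the max-min fairness allocation, if agent i reports a demand d_i >= e_i (her entitlement), then her allocation is at least e_i. -/
open Finset

/-- If agent `i` reports a demand at least her entitlement,
her max-min fair allocation is at least her entitlement. -/
theorem mmf_demand_above_entitlement {n : ℕ} (e d a : Fin n → ℝ)
    (he : ∀ i, 0 < e i) (hesum : ∑ i, e i = 1) (hd : ∀ i, 0 ≤ d i)
    (hmmf : IsMMF e d a) (i : Fin n) (hge : e i ≤ d i) :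
    e i ≤ a i := by
  obtain ⟨lam, hlam0, ha, hsum⟩ := hmmf
  rcases le_or_gt 1 lam with h1 | h1
  · rw [ha i, le_min_iff]
    refine ⟨hge, ?_⟩
    nlinarith [(he i).le]
  · -- lam < 1 : sum a ≤ lam * sum e = lam < 1, so sum a = sum d, forcing a = d
    have hle : ∀ j, a j ≤ d j := fun j => (ha j) ▸ min_le_left _ _
    have hsum1 : ∑ j, a j ≤ lam := by
      calc ∑ j, a j ≤ ∑ j, lam * e j := by
            refine Finset.sum_le_sum fun j _ => ?_
            rw [ha j]; exact min_le_right _ _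
        _ = lam := by rw [← Finset.mul_sum, hesum, mul_one]
    have hdsum : min 1 (∑ j, d j) = ∑ j, d j := by
      rcases min_cases 1 (∑ j, d j) with ⟨h, h'⟩ | ⟨h, h'⟩
      · linarith [hsum ▸ hsum1]
      · exact h
    rw [hdsum] at hsum
    have : a i = d i := by
      by_contra hne
      have hlt : a i < d i := lt_of_le_of_ne (hle i) hne
      have : ∑ j, a j < ∑ j, d j :=
        Finset.sum_lt_sum (fun j _ => hle j) ⟨i, Finset.mem_univ i, hlt⟩
      linarith [hsum]
    linarith [this ▸ hge]
end

section
/- Max-min fairness is strategy-proof: for any agent i with a utility function u_i that is strictly increasing up to her true demand D_i and constant thereafter, and for any fixed reported demands of all other agents, agent i's utility under truthful reporting d_i = D_i is at least her utility under any other report. -/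
open Finset

/-- Max-min fairness is strategy-proof: for an agent `i` whose utility is
strictly increasing up to her true demand `D` and constant thereafter,
and for any fixed reports of the other agents, the utility of her allocation
under truthful reporting is at least that under any other report `d i`. -/
theorem mmf_strategy_proof {n : ℕ} (e d : Fin n → ℝ) (i : Fin n) (D : ℝ)
    (he : ∀ j, 0 < e j) (hesum : ∑ j, e j = 1)
    (hd : ∀ j, 0 ≤ d j) (hD : 0 ≤ D)
    (u : ℝ → ℝ)
    (hstrict : StrictMonoOn u (Set.Icc 0 D))
    (hflat : ∀ x, D < x → u x = u D)
    (a astar : Fin n → ℝ)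
    (ha : IsMMF e d a)
    (hastar : IsMMF e (Function.update d i D) astar) :
    u (a i) ≤ u (astar i) := by
  obtain ⟨lam, hlam0, hA, hAs⟩ := ha
  obtain ⟨mu, hmu0, hB, hBs⟩ := hastar
  have ha0 : 0 ≤ a i := by
    rw [hA]; exact le_min (hd i) (mul_nonneg hlam0 (he i).le)
  have huD : ∀ x, 0 ≤ x → u x ≤ u D := by
    intro x hx
    rcases le_or_gt x D with h | h
    · exact hstrict.monotoneOn ⟨hx, h⟩ ⟨hD, le_refl D⟩ h
    · exact le_of_eq (hflat x h)
  by_cases hcase : D ≤ mu * e i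
  · have : astar i = D := by
      rw [hB, Function.update_self, min_eq_left hcase]
    rw [this]
    exact huD (a i) ha0
  · push_neg at hcase
    have hsi : astar i = mu * e i := by
      rw [hB, Function.update_self, min_eq_right hcase.le]
    -- first show ∑ astar = 1
    have hS1 : ∑ j, astar j = 1 := by
      rcases le_or_gt (∑ j, Function.update d i D j) 1 with h | h
      · exfalso
        have hsum : ∑ j, astar j = ∑ j, Function.update d i D j := by
          rw [hBs, min_eq_right h]
        have hle : ∀ j ∈ univ, astar j ≤ Function.update d i D j := by
          intro j _; rw [hB]; exact min_le_left _ _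
        have := (Finset.sum_eq_sum_iff_of_le hle).mp hsum i (mem_univ i)
        rw [hsi, Function.update_self] at this
        exact absurd this (ne_of_lt hcase)
      · rw [hBs, min_eq_left h.le]
    -- show a i ≤ astar i
    have key : a i ≤ astar i := by
      by_contra hcon
      push_neg at hcon
      have hmulam : mu * e i < lam * e i := by
        calc mu * e i = astar i := hsi.symm
        _ < a i := hcon
        _ ≤ lam * e i := by rw [hA]; exact min_le_right _ _
      have hml : mu ≤ lam := le_of_lt (lt_of_mul_lt_mul_right hmulam (he i).le)
      have hle : ∀ j ∈ univ, astar j ≤ a j := by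
        intro j _
        by_cases hji : j = i
        · subst hji; exact hcon.le
        · rw [hA, hB, Function.update_of_ne hji]
          exact min_le_min le_rfl (mul_le_mul_of_nonneg_right hml (he j).le)
      have hlt : ∑ j, astar j < ∑ j, a j :=
        Finset.sum_lt_sum hle ⟨i, mem_univ i, hcon⟩
      have : ∑ j, a j ≤ 1 := by rw [hAs]; exact min_le_left _ _
      linarith [hS1]
    have h1 : a i ∈ Set.Icc (0:ℝ) D := ⟨ha0, le_of_lt (lt_of_le_of_lt (key.trans_eq hsi) hcase)⟩
    have h2 : astar i ∈ Set.Icc (0:ℝ) D := ⟨le_trans ha0 key, le_of_lt (hsi ▸ hcase)⟩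
    exact hstrict.monotoneOn h1 h2 key
end

section
/- Max-min fairness is fair (sharing incentive): if agent i reports her true demand D_i, then u_i(a_i) >= u_i(e_i) regardless of the other agents' reports, where a_i is her MMF allocation and e_i her entitlement. -/
open Finset

/-- Max-min fairness is fair (sharing incentive): if agent `i` reports her true
demand `D`, then regardless of the other agents' reports, the utility of her
allocation is at least the utility of her entitlement. -/
theorem mmf_fair {n : ℕ} (e d : Fin n → ℝ) (i : Fin n) (D : ℝ)
    (he : ∀ j, 0 < e j) (hesum : ∑ j, e j = 1)
    (hd : ∀ j, 0 ≤ d j) (hD : 0 ≤ D)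
    (u : ℝ → ℝ) (hmono : Monotone u)
    (hstrict : StrictMonoOn u (Set.Icc 0 D))
    (hflat : ∀ x, D < x → u x = u D)
    (a : Fin n → ℝ)
    (hmmf : IsMMF e (Function.update d i D) a) :
    u (e i) ≤ u (a i) := by
  obtain ⟨lam, hlam0, ha, hsum⟩ := hmmf
  set d' := Function.update d i D with hd'
  have key : min D (e i) ≤ a i := by
    rcases le_or_gt 1 lam with h1 | h1
    · rw [ha i, hd', Function.update_self]
      have : e i ≤ lam * e i := le_mul_of_one_le_left (he i).le h1
      exact le_min (min_le_left _ _) (le_trans (min_le_right _ _) this)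
    · -- lam < 1: sum a < 1 so sum a = sum d', forcing a = d' pointwise
      have hle : ∀ j ∈ univ, a j ≤ d' j := fun j _ => (ha j).le.trans (min_le_left _ _)
      have hsa : ∑ j, a j ≤ lam := by
        calc ∑ j, a j ≤ ∑ j, lam * e j := by
              refine Finset.sum_le_sum fun j _ => ?_
              rw [ha j]; exact min_le_right _ _
          _ = lam := by rw [← Finset.mul_sum, hesum, mul_one]
      have hlt1 : ∑ j, a j < 1 := lt_of_le_of_lt hsa h1
      have heq : ∑ j, a j = ∑ j, d' j := by
        rcases min_cases 1 (∑ j, d' j) with ⟨h, _⟩ | ⟨h, _⟩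
        · rw [hsum, h] at hlt1; exact absurd hlt1 (lt_irrefl 1)
        · rw [hsum, h]
      have := (Finset.sum_eq_sum_iff_of_le hle).mp heq i (mem_univ i)
      rw [this, hd', Function.update_self]
      exact min_le_left _ _
  have h1 : u (min D (e i)) ≤ u (a i) := hmono key
  rcases le_or_gt (e i) D with h | h
  · rw [min_eq_right h] at h1; exact h1
  · rw [min_eq_left h.le] at h1
    rw [hflat (e i) h]; exact h1
end

section
/- If a multi-round mechanism chooses allocations at round t via max-min fairness using upper-bound demands dub_{it} >= Dtrue_{it} as the reported demands, then the instantaneous loss satisfies lot_t <= sum_{i=1}^n (dub_{it} - Dtrue_{it}), where lot_t = min(L_UR + L_OR, L_UD) as defined via the true demands. -/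
open Finset

/-- If the allocations on a round are chosen via max-min fairness using
upper bounds `dub i ≥ Dtrue i` on the true demands as the reported demands,
then the instantaneous loss `min (L_UR + L_OR, L_UD)` (defined with respect to
the true demands) is at most `∑ (dub i - Dtrue i)`. -/
theorem mmf_loss_of_upper_bounds {n : ℕ} (e Dtrue dub a : Fin n → ℝ)
    (he : ∀ i, 0 < e i) (hesum : ∑ i, e i = 1)
    (hD : ∀ i, 0 ≤ Dtrue i) (hub : ∀ i, Dtrue i ≤ dub i)
    (hmmf : IsMMF e dub a) :
    min ((1 - ∑ i, a i) + ∑ i, max (a i - Dtrue i) 0)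
        (∑ i, max (Dtrue i - a i) 0)
      ≤ ∑ i, (dub i - Dtrue i) := by
  obtain ⟨lam, hlam, ha, hsum⟩ := hmmf
  have haub : ∀ i, a i ≤ dub i := fun i => (ha i).le.trans (min_le_left _ _)
  have hrhs : 0 ≤ ∑ i, (dub i - Dtrue i) :=
    Finset.sum_nonneg fun i _ => sub_nonneg.mpr (hub i)
  by_cases h : (∑ i, dub i) ≤ 1
  · refine le_trans (min_le_right _ _) ?_
    have h1 : ∑ i, max (Dtrue i - a i) 0 ≤ ∑ i, (dub i - a i) := by
      refine Finset.sum_le_sum fun i _ => ?_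
      exact max_le (sub_le_sub_right (hub i) _) (sub_nonneg.mpr (haub i))
    have h2 : ∑ i, (dub i - a i) = 0 := by
      rw [Finset.sum_sub_distrib, hsum, min_eq_right h, sub_self]
    linarith
  · refine le_trans (min_le_left _ _) ?_
    have hs1 : ∑ i, a i = 1 := by
      rw [hsum, min_eq_left (le_of_not_ge h)]
    have h1 : ∑ i, max (a i - Dtrue i) 0 ≤ ∑ i, (dub i - Dtrue i) := by
      refine Finset.sum_le_sum fun i _ => ?_
      exact max_le (sub_le_sub_right (haub i) _) (sub_nonneg.mpr (hub i))
    linarith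
end

section
/- For the bracketed schedule with 2n exploration rounds per bracket followed by floor(e^q) rounds in bracket q, the number of completed brackets q_T after T >= 2n+3 rounds satisfies log(T/(2n+e)) <= q_T <= 1 + log(T). -/
open Finset

/-- Total number of rounds completed after `m` brackets when each bracket has
`2n` exploration rounds followed by `⌊e^q⌋` rounds in bracket `q`. -/
noncomputable def bracketRoundsExp (n m : ℕ) : ℕ :=
  2 * n * m + ∑ t ∈ Finset.Icc 1 m, ⌊Real.exp t⌋₊

lemma exp_nat_eq_pow (t : ℕ) : Real.exp t = Real.exp 1 ^ t := by
  rw [← Real.exp_nat_mul, mul_one]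

/-- For the schedule with `2n` exploration rounds per bracket followed by
`⌊e^q⌋` rounds in bracket `q`, the number of completed brackets `q` after
`T ≥ 2n + 3` rounds satisfies `log (T / (2n + e)) ≤ q ≤ 1 + log T`. -/
theorem bracket_count_log (n T q : ℕ) (hn : 1 ≤ n) (hq : 1 ≤ q)
    (hT : 2 * n + 3 ≤ T)
    (hlow : bracketRoundsExp n (q - 1) < T) (hhigh : T ≤ bracketRoundsExp n q) :
    Real.log ((T : ℝ) / (2 * n + Real.exp 1)) ≤ (q : ℝ) ∧
      (q : ℝ) ≤ 1 + Real.log T := by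
  have he : (1:ℝ) < Real.exp 1 := by
    have := Real.exp_one_gt_d9; linarith
  have he2 : (2:ℝ) < Real.exp 1 := by
    have := Real.exp_one_gt_d9; linarith
  have hTpos : (0:ℝ) < T := by
    have : 0 < T := by omega
    exact_mod_cast this
  constructor
  · -- lower bound
    have h1 : (T:ℝ) ≤ 2*n*q + ∑ t ∈ Icc 1 q, Real.exp t := by
      have h2 : (T:ℝ) ≤ ((2*n*q + ∑ t ∈ Icc 1 q, ⌊Real.exp t⌋₊ : ℕ) : ℝ) := by
        exact_mod_cast hhigh
      push_cast at h2
      have h3 : (∑ t ∈ Icc 1 q, (⌊Real.exp t⌋₊ : ℝ)) ≤ ∑ t ∈ Icc 1 q, Real.exp t := by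
        apply Finset.sum_le_sum
        intro i _
        exact Nat.floor_le (Real.exp_pos _).le
      linarith
    have hsum : ∑ t ∈ Icc 1 q, Real.exp t ≤ Real.exp 1 ^ (q+1) := by
      have hsub : Icc 1 q ⊆ Finset.range (q+1) := by
        intro x hx
        simp only [Finset.mem_Icc] at hx
        simp only [Finset.mem_range]; omega
      have h4 : ∑ t ∈ Icc 1 q, Real.exp t ≤ ∑ t ∈ Finset.range (q+1), Real.exp 1 ^ t := by
        calc ∑ t ∈ Icc 1 q, Real.exp t = ∑ t ∈ Icc 1 q, Real.exp 1 ^ t := by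
              apply Finset.sum_congr rfl; intro t _; exact exp_nat_eq_pow t
          _ ≤ ∑ t ∈ Finset.range (q+1), Real.exp 1 ^ t := by
              apply Finset.sum_le_sum_of_subset_of_nonneg hsub
              intro i _ _; positivity
      have h5 : ∑ t ∈ Finset.range (q+1), Real.exp 1 ^ t
          = (Real.exp 1 ^ (q+1) - 1) / (Real.exp 1 - 1) := geom_sum_eq (by linarith) _
      have h6 : (Real.exp 1 ^ (q+1) - 1) / (Real.exp 1 - 1) ≤ Real.exp 1 ^ (q+1) - 1 := by
        apply div_le_self
        · have : (1:ℝ) ≤ Real.exp 1 ^ (q+1) := one_le_pow₀ he.le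
          linarith
        · linarith [he2]
      linarith
    have hqle : (q:ℝ) ≤ Real.exp 1 ^ q := by
      have := Real.add_one_le_exp (q:ℝ)
      rw [exp_nat_eq_pow q] at this
      linarith
    have hfin : (T:ℝ) ≤ (2*n + Real.exp 1) * Real.exp 1 ^ q := by
      have hn0 : (0:ℝ) ≤ 2*n := by positivity
      have : (2:ℝ)*n*q ≤ 2*n*(Real.exp 1 ^ q) := by
        apply mul_le_mul_of_nonneg_left hqle hn0
      have hpow : Real.exp 1 ^ (q+1) = Real.exp 1 * Real.exp 1 ^ q := by ring
      nlinarith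
    rw [Real.log_le_iff_le_exp (by positivity)]
    rw [div_le_iff₀ (by positivity), exp_nat_eq_pow q]
    linarith
  · -- upper bound
    rcases Nat.eq_or_lt_of_le hq with hq1 | hq2
    · -- q = 1
      rw [← hq1]
      have : (0:ℝ) ≤ Real.log T := Real.log_nonneg (by exact_mod_cast (by omega : 1 ≤ T))
      push_cast; linarith
    · -- q ≥ 2
      have hmem : q - 1 ∈ Icc 1 (q - 1) := by
        simp only [Finset.mem_Icc]; omega
      have h7 : ⌊Real.exp (q-1 : ℕ)⌋₊ ≤ bracketRoundsExp n (q-1) := by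
        unfold bracketRoundsExp
        have := Finset.single_le_sum (f := fun t : ℕ => ⌊Real.exp t⌋₊)
          (s := Icc 1 (q-1)) (fun i _ => Nat.zero_le _) hmem
        omega
      have h8 : (⌊Real.exp (q-1 : ℕ)⌋₊ : ℕ) + 1 ≤ T := by omega
      have h9 : Real.exp ((q:ℕ) - 1 : ℕ) < T := by
        have := Nat.lt_floor_add_one (Real.exp ((q:ℕ) - 1 : ℕ))
        have h8' : ((⌊Real.exp (q-1 : ℕ)⌋₊ : ℝ) + 1) ≤ (T:ℝ) := by exact_mod_cast h8
        linarith
      have hc : (((q:ℕ) - 1 : ℕ) : ℝ) = (q:ℝ) - 1 := by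
        push_cast [Nat.cast_sub hq]; ring
      have h10 : Real.exp ((q:ℝ) - 1) ≤ (T:ℝ) := by rw [← hc]; exact h9.le
      have := (Real.le_log_iff_exp_le hTpos).mpr h10
      linarith
end

section
/- Binary search demand estimation: in the deterministic-feedback non-strategyproof mechanism, the total over-allocation satisfies sum over rounds t >= 2 of max(a_{it} - Dtrue_{it}, 0) <= vmax * dmax for each agent i, where at each over-allocating round s_{r+1} the normalized over-allocation (a_{i,s_{r+1}}/v_{i,s_{r+1}} - w_i) is at most half the previous over-allocation, and the first over-allocation is at most dmax/2. -/
open Finset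

/-- Binary-search demand estimation bounds the total over-allocation: if
`s : Fin m → ℕ` strictly monotonically enumerates exactly the rounds
`t ∈ [2, T]` in which the allocation `a t` exceeds the true demand
`v t * w`, the first normalized excess is at most `dmax / 2`, and the
normalized excess at least halves between consecutive over-allocating rounds,
then `∑_{t=2}^T max (a t - v t * w) 0 ≤ vmax * dmax`. -/
theorem binary_search_overallocation (T : ℕ) (a v : ℕ → ℝ)
    (w dmax vmax : ℝ) (hw0 : 0 ≤ w) (hwd : w ≤ dmax) (hdmax : 0 < dmax)
    (hv : ∀ t, 0 < v t) (hvmax : ∀ t, v t ≤ vmax)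
    (m : ℕ) (s : Fin m → ℕ) (hs : StrictMono s)
    (hrange : ∀ t : ℕ, (2 ≤ t ∧ t ≤ T ∧ v t * w < a t) ↔ ∃ r, s r = t)
    (hfirst : ∀ h0 : 0 < m, a (s ⟨0, h0⟩) / v (s ⟨0, h0⟩) - w ≤ dmax / 2)
    (hhalf : ∀ (r : ℕ) (h1 : r + 1 < m),
      a (s ⟨r + 1, h1⟩) / v (s ⟨r + 1, h1⟩) - w
        ≤ (a (s ⟨r, Nat.lt_of_succ_lt h1⟩) / v (s ⟨r, Nat.lt_of_succ_lt h1⟩) - w) / 2) :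
    ∑ t ∈ Finset.Icc 2 T, max (a t - v t * w) 0 ≤ vmax * dmax := by

  have hvmax0 : 0 < vmax := lt_of_lt_of_le (hv 0) (hvmax 0)
  have hpos : ∀ r : Fin m, 0 < a (s r) / v (s r) - w := by
    intro r
    have h := (hrange (s r)).mpr ⟨r, rfl⟩
    have hvr := hv (s r)
    have h3 := h.2.2
    rw [sub_pos, lt_div_iff₀ hvr]
    linarith [h3]
  have hbound : ∀ r (hr : r < m),
      a (s ⟨r, hr⟩) / v (s ⟨r, hr⟩) - w ≤ dmax / 2 * (1/2)^r := by
    intro r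
    induction r with
    | zero => intro hr; simpa using hfirst hr
    | succ n ih =>
      intro hr
      have h1 := hhalf n hr
      have h2 := ih (Nat.lt_of_succ_lt hr)
      calc a (s ⟨n+1, hr⟩) / v (s ⟨n+1, hr⟩) - w
          ≤ (a (s ⟨n, Nat.lt_of_succ_lt hr⟩) / v (s ⟨n, Nat.lt_of_succ_lt hr⟩) - w) / 2 := h1
        _ ≤ (dmax / 2 * (1/2)^n) / 2 := by linarith
        _ = dmax / 2 * (1/2)^(n+1) := by ring
  have hsplit : ∑ t ∈ Finset.Icc 2 T, max (a t - v t * w) 0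
      = ∑ t ∈ (Finset.Icc 2 T).filter (fun t => v t * w < a t), (a t - v t * w) := by
    rw [Finset.sum_filter]
    apply Finset.sum_congr rfl
    intro t _
    by_cases h : v t * w < a t
    · simp [h, max_eq_left (by linarith : (0:ℝ) ≤ a t - v t * w)]
    · push_neg at h
      simp [not_lt.mpr h, max_eq_right (by linarith : a t - v t * w ≤ (0:ℝ))]
  have hset : (Finset.Icc 2 T).filter (fun t => v t * w < a t)
      = Finset.image s Finset.univ := by
    ext t
    simp only [Finset.mem_filter, Finset.mem_Icc, Finset.mem_image, Finset.mem_univ, true_and]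
    constructor
    · rintro ⟨⟨h1, h2⟩, h3⟩; exact (hrange t).mp ⟨h1, h2, h3⟩
    · rintro ⟨r, rfl⟩
      have h := (hrange (s r)).mpr ⟨r, rfl⟩
      exact ⟨⟨h.1, h.2.1⟩, h.2.2⟩
  rw [hsplit, hset, Finset.sum_image (fun x _ y _ h => hs.injective h)]
  have key : ∀ r : Fin m, a (s r) - v (s r) * w ≤ vmax * (dmax / 2 * (1/2)^(r:ℕ)) := by
    intro r
    have hvr := hv (s r)
    have h1 : a (s r) / v (s r) - w ≤ dmax / 2 * (1/2)^(r:ℕ) := by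
      have := hbound r.1 r.2
      simpa [Fin.eta] using this
    have h2 := hpos r
    have heq : a (s r) - v (s r) * w = v (s r) * (a (s r) / v (s r) - w) := by
      field_simp
    rw [heq]
    calc v (s r) * (a (s r) / v (s r) - w)
        ≤ vmax * (a (s r) / v (s r) - w) :=
          mul_le_mul_of_nonneg_right (hvmax _) (le_of_lt h2)
      _ ≤ vmax * (dmax / 2 * (1/2)^(r:ℕ)) :=
          mul_le_mul_of_nonneg_left h1 (le_of_lt hvmax0)
  calc ∑ r : Fin m, (a (s r) - v (s r) * w)
      ≤ ∑ r : Fin m, vmax * (dmax / 2 * (1/2)^(r:ℕ)) :=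
        Finset.sum_le_sum (fun r _ => key r)
    _ = vmax * (dmax / 2) * ∑ r ∈ Finset.range m, ((1:ℝ)/2)^r := by
        rw [← Fin.sum_univ_eq_sum_range (fun r => ((1:ℝ)/2)^r) m, Finset.mul_sum]
        apply Finset.sum_congr rfl; intro r _; ring
    _ ≤ vmax * (dmax / 2) * 2 := by
        apply mul_le_mul_of_nonneg_left (sum_geometric_two_le m)
        positivity
    _ = vmax * dmax := by ring
end

section
/- Fairness decomposition under upper-bound reporting: suppose on round t the allocations are set via MMF and agent i's reported demand is d_{it} = ud_{it} * v_{it}. If udub_{it} >= max(wtrue_i, ud_{it}), then u_i(e_i / v_{it}) - u_i(a_{it}/v_{it}) <= L_i * (udub_{it} - ud_{it}), where L_i is the Lipschitz constant of u_i. -/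
open Finset

/-- Fairness decomposition under upper-bound reporting: if on some round the
allocations are set via max-min fairness, agent `i`'s reported demand is
`d i = ud * v` where `v > 0` is her load, her `L`-Lipschitz nondecreasing
utility `u` is maximised at her true unit demand `w`, and
`udub ≥ max w ud`, then
`u (e i / v) - u (a i / v) ≤ L * (udub - ud)`. -/
theorem mmf_fairness_decomposition {n : ℕ} (e d a : Fin n → ℝ)
    (he : ∀ j, 0 < e j) (hesum : ∑ j, e j = 1) (hd : ∀ j, 0 ≤ d j)
    (i : Fin n) (v ud udub w L : ℝ)
    (hv : 0 < v) (hrep : d i = ud * v)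
    (hudubw : w ≤ udub) (hudubd : ud ≤ udub)
    (u : ℝ → ℝ) (hL : 0 ≤ L)
    (hLip : ∀ x y, |u x - u y| ≤ L * |x - y|)
    (hmono : Monotone u) (hmax : ∀ x, u x ≤ u w)
    (hmmf : IsMMF e d a) :
    u (e i / v) - u (a i / v) ≤ L * (udub - ud) := by
  obtain ⟨lam, hlam0, hai, hsum⟩ := hmmf
  have hRHS : 0 ≤ L * (udub - ud) := mul_nonneg hL (by linarith)
  -- key lemma: u x - u (ud) ≤ L * (udub - ud) for any x
  have key : ∀ x : ℝ, u x - u ud ≤ L * (udub - ud) := by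
    intro x
    rcases le_or_gt w ud with hwu | hwu
    · have : u x ≤ u ud := (hmax x).trans (hmono hwu)
      linarith
    · have h1 : u x - u ud ≤ u w - u ud := by linarith [hmax x]
      have h2 : u w - u ud ≤ L * |w - ud| :=
        (le_abs_self _).trans (hLip w ud)
      have h3 : |w - ud| = w - ud := abs_of_pos (by linarith)
      have : L * (w - ud) ≤ L * (udub - ud) :=
        mul_le_mul_of_nonneg_left (by linarith) hL
      rw [h3] at h2; linarith
  -- claim: a i ≥ min (d i) (e i)
  have hclaim : min (d i) (e i) ≤ a i := by
    rcases le_or_gt 1 lam with h1 | h1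
    · rw [hai i]
      exact min_le_min le_rfl (le_mul_of_one_le_left (he i).le h1)
    · -- lam < 1 : every a j = d j
      have hle : ∀ j, a j ≤ d j := fun j => by rw [hai j]; exact min_le_left _ _
      have hsa : ∑ j, a j ≤ lam := by
        calc ∑ j, a j ≤ ∑ j, lam * e j := by
              apply Finset.sum_le_sum
              intro j _; rw [hai j]; exact min_le_right _ _
          _ = lam * ∑ j, e j := by rw [Finset.mul_sum]
          _ = lam := by rw [hesum, mul_one]
      have hdlt : ∑ j, d j < 1 := by
        by_contra h
        push_neg at h
        have : min 1 (∑ j, d j) = 1 := min_eq_left h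
        rw [this] at hsum; linarith
      have hsumeq : ∑ j, a j = ∑ j, d j := by
        rw [hsum, min_eq_right hdlt.le]
      have : a i = d i := by
        have := (Finset.sum_eq_sum_iff_of_le (fun j _ => hle j)).mp hsumeq
        exact this i (Finset.mem_univ i)
      rw [this]; exact min_le_left _ _
  rcases le_or_gt (e i) (a i) with hea | hea
  · have : u (e i / v) ≤ u (a i / v) :=
      hmono (div_le_div_of_nonneg_right hea hv.le)
    linarith
  · have hdi : a i = d i := by
      rcases min_cases (d i) (e i) with ⟨h, _⟩ | ⟨h, _⟩
      · have hle : a i ≤ d i := by rw [hai i]; exact min_le_left _ _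
        rw [h] at hclaim; linarith
      · rw [h] at hclaim; linarith
    have : a i / v = ud := by
      rw [hdi, hrep, mul_div_assoc, div_self hv.ne', mul_one]
    rw [this]
    exact key _
end

section
/- Elliptical potential bound: for allocations a_{it} in (0,1], loads v_{it} in [vmin, vmax], sub-Gaussian constants sigma_{it} in [sigmamin, sigmamax], entitlements e_i with a_{i1} = e_i, and A_{it}^2 = sum_{s=1}^{t-1} a_{is}^2/(v_{is}^2 sigma_{is}^2), one has sum_{t=1}^T min(c, a_{it}^2/(sigma_{it}^2 v_{it}^2 A_{it}^2)) <= (c / log(1+c)) * log(C3 * T), where C3 = (sigmamax * vmax / (sigmamin * vmin * min_i e_i))^2 and c > 0 is arbitrary. -/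
open Finset

lemma key_concave (c x : ℝ) (hc : 0 < c) (hx0 : 0 ≤ x) (hxc : x ≤ c) :
    x * Real.log (1 + c) ≤ c * Real.log (1 + x) := by
  have h := (strictConcaveOn_log_Ioi.concaveOn).2
    (show (1:ℝ) + c ∈ Set.Ioi (0:ℝ) by simp; linarith)
    (show (1:ℝ) ∈ Set.Ioi (0:ℝ) by simp)
    (show (0:ℝ) ≤ x / c by positivity)
    (show (0:ℝ) ≤ 1 - x / c by
      have : x / c ≤ 1 := (div_le_one hc).mpr hxc
      linarith)
    (by ring)
  simp only [smul_eq_mul, Real.log_one, mul_zero, add_zero, mul_one] at h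
  have hxx : x / c * (1 + c) + (1 - x / c) = 1 + x := by field_simp; ring
  rw [hxx] at h
  have := mul_le_mul_of_nonneg_left h hc.le
  calc x * Real.log (1 + c) = c * (x / c * Real.log (1 + c)) := by field_simp
    _ ≤ c * Real.log (1 + x) := this

lemma telescope_log (g : ℕ → ℝ) : ∀ T, 1 ≤ T →
    ∑ t ∈ Finset.Icc 2 T, (g (t + 1) - g t) = g (T + 1) - g 2 := by
  intro T hT
  induction T, hT using Nat.le_induction with
  | base => simp
  | succ T hT ih =>
    rw [Finset.sum_Icc_succ_top (by omega), ih]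
    ring

/-- Elliptical potential bound: for allocations `a i t ∈ (0,1]`, loads
`v i t ∈ [vmin, vmax]`, sub-Gaussian constants `σ i t ∈ [smin, smax]`,
entitlements `e i = a i 1`, and
`A_{it}² = ∑_{s=1}^{t-1} a_{is}² / (v_{is}² σ_{is}²)`, one has
`∑_{t=1}^T min c (a_{it}²/(σ_{it}² v_{it}² A_{it}²))
  ≤ (c / log (1+c)) * log (C₃ T)` with
`C₃ = (smax vmax / (smin vmin minᵢ eᵢ))²`. -/
theorem elliptical_potential_bound {n : ℕ} (T : ℕ) (hT : 1 ≤ T)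
    (a v σ : Fin n → ℕ → ℝ) (e : Fin n → ℝ)
    (vmin vmax smin smax c : ℝ)
    (hc : 0 < c) (hvmin : 0 < vmin) (hsmin : 0 < smin)
    (ha : ∀ i t, 0 < a i t ∧ a i t ≤ 1)
    (hv : ∀ i t, vmin ≤ v i t ∧ v i t ≤ vmax)
    (hσ : ∀ i t, smin ≤ σ i t ∧ σ i t ≤ smax)
    (hinit : ∀ i, a i 1 = e i) (hepos : ∀ i, 0 < e i)
    (i : Fin n) :
    ∑ t ∈ Finset.Icc 1 T,
        min c ((a i t) ^ 2 / ((σ i t) ^ 2 * (v i t) ^ 2 *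
          (∑ s ∈ Finset.Icc 1 (t - 1), (a i s) ^ 2 / ((v i s) ^ 2 * (σ i s) ^ 2))))
      ≤ (c / Real.log (1 + c)) *
          Real.log ((smax * vmax /
            (smin * vmin * Finset.inf' Finset.univ ⟨i, Finset.mem_univ i⟩ e)) ^ 2 * T) := by
  set E := Finset.inf' Finset.univ ⟨i, Finset.mem_univ i⟩ e with hE
  have hEpos : 0 < E := by
    obtain ⟨j, -, hj⟩ := Finset.exists_mem_eq_inf' ⟨i, Finset.mem_univ i⟩ e
    exact lt_of_lt_of_eq (hepos j) hj.symm
  have hEi : E ≤ e i := Finset.inf'_le _ (Finset.mem_univ i)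
  have hvmax : 0 < vmax := lt_of_lt_of_le hvmin (le_trans (hv i 0).1 (hv i 0).2)
  have hsmax : 0 < smax := lt_of_lt_of_le hsmin (le_trans (hσ i 0).1 (hσ i 0).2)
  set f : ℕ → ℝ := fun s => (a i s) ^ 2 / ((v i s) ^ 2 * (σ i s) ^ 2) with hf
  set B : ℕ → ℝ := fun t => ∑ s ∈ Finset.Icc 1 (t - 1), f s with hB
  have hvpos : ∀ t, 0 < v i t := fun t => lt_of_lt_of_le hvmin (hv i t).1
  have hspos : ∀ t, 0 < σ i t := fun t => lt_of_lt_of_le hsmin (hσ i t).1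
  have hfpos : ∀ s, 0 < f s := fun s => by
    have := (ha i s).1; have := hvpos s; have := hspos s
    rw [hf]; positivity
  have hfle : ∀ s, f s ≤ 1 / (vmin ^ 2 * smin ^ 2) := fun s => by
    rw [hf]
    have h1 : vmin ^ 2 ≤ (v i s) ^ 2 := pow_le_pow_left₀ hvmin.le (hv i s).1 2
    have h2 : smin ^ 2 ≤ (σ i s) ^ 2 := pow_le_pow_left₀ hsmin.le (hσ i s).1 2
    have h3 : vmin ^ 2 * smin ^ 2 ≤ (v i s) ^ 2 * (σ i s) ^ 2 :=
      mul_le_mul h1 h2 (by positivity) (by positivity)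
    have h4 : (a i s) ^ 2 ≤ 1 := by nlinarith [(ha i s).1, (ha i s).2]
    exact div_le_div₀ (by norm_num) h4 (by positivity) h3
  have hBrec : ∀ t, 1 ≤ t → B (t + 1) = B t + f t := by
    intro t ht
    have h1 : t + 1 - 1 = t := by omega
    have h2 : t - 1 + 1 = t := by omega
    rw [hB]
    simp only [h1]
    rw [← h2, Finset.sum_Icc_succ_top (by omega), h2]
  have hBpos : ∀ t, 2 ≤ t → 0 < B t := by
    intro t ht
    apply Finset.sum_pos (fun s _ => hfpos s)
    exact ⟨1, Finset.mem_Icc.mpr ⟨le_refl 1, by omega⟩⟩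
  have hlogc : 0 < Real.log (1 + c) := Real.log_pos (by linarith)
  set K := c / Real.log (1 + c) with hK
  have hKpos : 0 < K := by rw [hK]; positivity
  have hterm : ∀ t, (a i t) ^ 2 / ((σ i t) ^ 2 * (v i t) ^ 2 *
      (∑ s ∈ Finset.Icc 1 (t - 1), (a i s) ^ 2 / ((v i s) ^ 2 * (σ i s) ^ 2))) = f t / B t := by
    intro t
    rw [hf, hB]
    simp only [hf]
    simp only [div_div]
    ring_nf
  have hsplit : Finset.Icc 1 T = insert 1 (Finset.Icc 2 T) := by
    ext x; simp only [Finset.mem_Icc, Finset.mem_insert]; omega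
  have h1nm : (1 : ℕ) ∉ Finset.Icc 2 T := by simp
  -- term at t = 1 is min c 0 = 0
  have ht1 : min c ((a i 1) ^ 2 / ((σ i 1) ^ 2 * (v i 1) ^ 2 *
      (∑ s ∈ Finset.Icc 1 (1 - 1), (a i s) ^ 2 / ((v i s) ^ 2 * (σ i s) ^ 2)))) = 0 := by
    norm_num
    exact hc.le
  -- per-term bound for t ≥ 2
  have hper : ∀ t ∈ Finset.Icc 2 T, min c (f t / B t)
      ≤ K * (Real.log (B (t + 1)) - Real.log (B t)) := by
    intro t ht
    rw [Finset.mem_Icc] at ht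
    have hBt : 0 < B t := hBpos t ht.1
    have hr : 0 < f t / B t := div_pos (hfpos t) hBt
    set r := f t / B t with hrdef
    have hx0 : (0:ℝ) ≤ min c r := le_min hc.le hr.le
    have hxc : min c r ≤ c := min_le_left _ _
    have hkey := key_concave c (min c r) hc hx0 hxc
    have hmono : Real.log (1 + min c r) ≤ Real.log (1 + r) :=
      Real.log_le_log (by linarith) (by have := min_le_right c r; linarith)
    have h2 : min c r * Real.log (1 + c) ≤ c * Real.log (1 + r) := by
      calc min c r * Real.log (1 + c) ≤ c * Real.log (1 + min c r) := hkey
        _ ≤ c * Real.log (1 + r) := by nlinarith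
    have hlogeq : Real.log (1 + r) = Real.log (B (t + 1)) - Real.log (B t) := by
      have : 1 + r = B (t + 1) / B t := by
        rw [hrdef, hBrec t (by omega)]
        field_simp
      rw [this, Real.log_div (by have := hBrec t (by omega); nlinarith [hfpos t]) hBt.ne']
    rw [← hlogeq, hK]
    rw [div_mul_eq_mul_div, le_div_iff₀ hlogc]
    linarith
  -- telescoping
  have htel : ∑ t ∈ Finset.Icc 2 T, (Real.log (B (t + 1)) - Real.log (B t))
      = Real.log (B (T + 1)) - Real.log (B 2) :=
    telescope_log (fun t => Real.log (B t)) T hT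
  -- bounds on B (T+1) and B 2
  have hBtop : B (T + 1) ≤ T / (vmin ^ 2 * smin ^ 2) := by
    have h1 : T + 1 - 1 = T := by omega
    rw [hB]
    simp only [h1]
    calc ∑ s ∈ Finset.Icc 1 T, f s
        ≤ ∑ _s ∈ Finset.Icc 1 T, (1 / (vmin ^ 2 * smin ^ 2)) :=
          Finset.sum_le_sum (fun s _ => hfle s)
      _ = T * (1 / (vmin ^ 2 * smin ^ 2)) := by
          rw [Finset.sum_const, Nat.card_Icc]
          simp [nsmul_eq_mul]
      _ = T / (vmin ^ 2 * smin ^ 2) := by ring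
  have hB2 : E ^ 2 / (vmax ^ 2 * smax ^ 2) ≤ B 2 := by
    have hB2f : B 2 = f 1 := by rw [hB]; simp
    have hfval : f 1 = e i ^ 2 / ((v i 1) ^ 2 * (σ i 1) ^ 2) := by
      simp only [hf, hinit i]
    rw [hB2f, hfval]
    have h1 : (v i 1) ^ 2 ≤ vmax ^ 2 := pow_le_pow_left₀ (hvpos 1).le (hv i 1).2 2
    have h2 : (σ i 1) ^ 2 ≤ smax ^ 2 := pow_le_pow_left₀ (hspos 1).le (hσ i 1).2 2
    have h3 : (v i 1) ^ 2 * (σ i 1) ^ 2 ≤ vmax ^ 2 * smax ^ 2 :=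
      mul_le_mul h1 h2 (by positivity) (by positivity)
    have h4 : E ^ 2 ≤ e i ^ 2 := pow_le_pow_left₀ hEpos.le hEi 2
    exact div_le_div₀ (by positivity) h4 (mul_pos (pow_pos (hvpos 1) 2) (pow_pos (hspos 1) 2)) h3
  have hY : (0:ℝ) < E ^ 2 / (vmax ^ 2 * smax ^ 2) := by positivity
  have hTpos : (0:ℝ) < T := by exact_mod_cast hT
  have hlogsum : Real.log (B (T + 1)) - Real.log (B 2)
      ≤ Real.log ((smax * vmax / (smin * vmin * E)) ^ 2 * T) := by
    have hXY : (smax * vmax / (smin * vmin * E)) ^ 2 * T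
        = (T / (vmin ^ 2 * smin ^ 2)) / (E ^ 2 / (vmax ^ 2 * smax ^ 2)) := by
      field_simp
    rw [hXY, Real.log_div (by positivity) (by positivity)]
    have h1 : Real.log (B (T + 1)) ≤ Real.log (T / (vmin ^ 2 * smin ^ 2)) :=
      Real.log_le_log (hBpos (T + 1) (by omega)) hBtop
    have h2 : Real.log (E ^ 2 / (vmax ^ 2 * smax ^ 2)) ≤ Real.log (B 2) :=
      Real.log_le_log hY hB2
    linarith
  -- put it all together
  calc ∑ t ∈ Finset.Icc 1 T,
        min c ((a i t) ^ 2 / ((σ i t) ^ 2 * (v i t) ^ 2 *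
          (∑ s ∈ Finset.Icc 1 (t - 1), (a i s) ^ 2 / ((v i s) ^ 2 * (σ i s) ^ 2))))
      = ∑ t ∈ Finset.Icc 2 T, min c (f t / B t) := by
        rw [hsplit, Finset.sum_insert h1nm, ht1, zero_add]
        exact Finset.sum_congr rfl (fun t _ => by rw [hterm t])
    _ ≤ ∑ t ∈ Finset.Icc 2 T, K * (Real.log (B (t + 1)) - Real.log (B t)) :=
        Finset.sum_le_sum hper
    _ = K * (Real.log (B (T + 1)) - Real.log (B 2)) := by
        rw [← Finset.mul_sum, htel]
    _ ≤ K * Real.log ((smax * vmax / (smin * vmin * E)) ^ 2 * T) :=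
        mul_le_mul_of_nonneg_left hlogsum hKpos.le
end
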